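/- Let 𝕜 be a commutative ring and A a 𝕜-algebra. If a and b are two commuting split elements of A, then a + b and a·b are also split. -/

import Mathlib

/-- An element `a` of a `𝕜`-algebra `A` is *split* over `𝕜` if there exist finitely many
scalars `u_1, ..., u_n ∈ 𝕜` (not necessarily distinct) with `∏ (a - u_i • 1) = 0`. -/
def IsSplit (𝕜 : Type*) [CommRing 𝕜] {A : Type*} [Ring A] [Algebra 𝕜 A] (a : A) : Prop :=
  ∃ us : List 𝕜, (us.map fun u => a - algebraMap 𝕜 A u).prod = 0

private lemma list_prod_bind {M : Type*} [Monoid M] {α : Type*} (l : List α) (f : α → List M) :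
    (l.flatMap f).prod = (l.map fun x => (f x).prod).prod := by
  induction l with
  | nil => simp
  | cons x xs ih => simp [ih]

private lemma key {R : Type*} [CommRing R] (x : R) (l : List R) :
    ∃ c, (l.map fun y => x + y).prod = x * c + l.prod := by
  induction l with
  | nil => exact ⟨0, by simp⟩
  | cons y ys ih =>
    obtain ⟨c, hc⟩ := ih
    exact ⟨(x + y) * c + ys.prod, by simp only [List.map_cons, List.prod_cons, hc]; ring⟩

private lemma main {R ι : Type*} [CommRing R] (us : List ι) (g h : ι → R)
    (hf : ∀ u ∈ us, ∃ c, g u = h u * c) :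
    ∃ c, (us.map g).prod = (us.map h).prod * c := by
  induction us with
  | nil => exact ⟨1, by simp⟩
  | cons u us ih =>
    obtain ⟨c, hc⟩ := ih fun v hv => hf v (List.mem_cons_of_mem _ hv)
    obtain ⟨d, hd⟩ := hf u (List.mem_cons_self)
    exact ⟨d * c, by simp only [List.map_cons, List.prod_cons, hc, hd]; ring⟩

private lemma prod_map_const_mul {R : Type*} [CommMonoid R] {α : Type*} (k : R) (f : α → R)
    (l : List α) : (l.map fun y => k * f y).prod = k ^ l.length * (l.map f).prod := by
  induction l with
  | nil => simp
  | cons y ys ih => simp [ih, pow_succ, mul_assoc, mul_comm, mul_left_comm]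

/-- If `a` and `b` are two commuting split elements of a `𝕜`-algebra `A`, then
`a + b` and `a * b` are split as well. -/
theorem stmt8 {𝕜 A : Type*} [CommRing 𝕜] [Ring A] [Algebra 𝕜 A]
    (a b : A) (hab : a * b = b * a) (ha : IsSplit 𝕜 a) (hb : IsSplit 𝕜 b) :
    IsSplit 𝕜 (a + b) ∧ IsSplit 𝕜 (a * b) := by
  obtain ⟨us, hus⟩ := ha
  obtain ⟨vs, hvs⟩ := hb
  set S := Algebra.adjoin 𝕜 ({a, b} : Set A) with hS
  letI : CommRing S := Algebra.adjoinCommRingOfComm 𝕜 (by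
    rintro x (rfl | rfl) y (rfl | rfl) <;> simp [hab])
  have hamem : a ∈ S := Algebra.subset_adjoin (by simp)
  have hbmem : b ∈ S := Algebra.subset_adjoin (by simp)
  set a' : S := ⟨a, hamem⟩ with ha'
  set b' : S := ⟨b, hbmem⟩ with hb'
  have hval : Function.Injective (S.val : S →ₐ[𝕜] A) := Subtype.val_injective
  have husS : (us.map fun u => a' - algebraMap 𝕜 S u).prod = 0 := by
    apply hval
    rw [map_list_prod]
    simpa [Function.comp_def, List.map_map] using hus
  have hvsS : (vs.map fun v => b' - algebraMap 𝕜 S v).prod = 0 := by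
    apply hval
    rw [map_list_prod]
    simpa [Function.comp_def, List.map_map] using hvs
  have transfer : ∀ (ws : List 𝕜) (z : A) (hz : z ∈ S),
      ((ws.map fun w => (⟨z, hz⟩ : S) - algebraMap 𝕜 S w).prod = 0) →
      ((ws.map fun w => z - algebraMap 𝕜 A w).prod = 0) := by
    intro ws z hz h
    have := congrArg (S.val : S →ₐ[𝕜] A) h
    rw [map_list_prod] at this
    simpa [Function.comp_def, List.map_map] using this
  constructor
  · refine ⟨us.flatMap fun u => vs.map fun v => u + v, ?_⟩
    have hz : a + b ∈ S := add_mem hamem hbmem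
    apply transfer _ _ hz
    rw [List.map_flatMap, list_prod_bind]
    obtain ⟨c, hc⟩ := main us
      (fun u => ((vs.map fun v => u + v).map
        fun w => (⟨a + b, hz⟩ : S) - algebraMap 𝕜 S w).prod)
      (fun u => a' - algebraMap 𝕜 S u)
      (by
        intro u _
        obtain ⟨c, hc⟩ := key (a' - algebraMap 𝕜 S u) (vs.map fun v => b' - algebraMap 𝕜 S v)
        refine ⟨c, ?_⟩
        simp only [List.map_map]
        rw [show ((fun w => (⟨a + b, hz⟩ : S) - algebraMap 𝕜 S w) ∘ fun v => u + v)
            = ((fun y => (a' - algebraMap 𝕜 S u) + y) ∘ fun v => b' - algebraMap 𝕜 S v) from ?_,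
          ← List.map_map, hc, hvsS, add_zero]
        funext v
        simp only [Function.comp, map_add]
        apply Subtype.ext
        push_cast
        abel)
    rw [hc, husS, zero_mul]
  · refine ⟨us.flatMap fun u => vs.map fun v => u * v, ?_⟩
    have hz : a * b ∈ S := mul_mem hamem hbmem
    apply transfer _ _ hz
    rw [List.map_flatMap, list_prod_bind]
    obtain ⟨c, hc⟩ := main us
      (fun u => ((vs.map fun v => u * v).map
        fun w => (⟨a * b, hz⟩ : S) - algebraMap 𝕜 S w).prod)
      (fun u => a' - algebraMap 𝕜 S u)
      (by
        intro u _
        obtain ⟨c, hc⟩ := key ((a' - algebraMap 𝕜 S u) * b')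
          (vs.map fun v => algebraMap 𝕜 S u * (b' - algebraMap 𝕜 S v))
        refine ⟨b' * c, ?_⟩
        simp only [List.map_map]
        rw [show ((fun w => (⟨a * b, hz⟩ : S) - algebraMap 𝕜 S w) ∘ fun v => u * v)
            = ((fun y => (a' - algebraMap 𝕜 S u) * b' + y)
              ∘ fun v => algebraMap 𝕜 S u * (b' - algebraMap 𝕜 S v)) from ?_,
          ← List.map_map, hc,
          prod_map_const_mul (algebraMap 𝕜 S u) (fun v => b' - algebraMap 𝕜 S v) vs,
          hvsS, mul_zero, add_zero]
        · ring
        · funext v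
          simp only [Function.comp, map_mul]
          apply Subtype.ext
          push_cast
          rw [sub_mul, mul_sub]
          abel)
    rw [hc, husS, zero_mul]
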